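/- In the repeated solicitation model with Poisson(v) prior, the expected total yield satisfies E[Y] = v·E[F(T)], where Y = X_1 + ... + X_{T-1}, and F(k) = π_1 + ... + π_k is the distribution function of U_1. -/

import Mathlib

open MeasureTheory ProbabilityTheory
open scoped ENNReal NNReal

lemma my_exp_tsum (lam : ℝ) : ∑' n : ℕ, lam ^ n / n.factorial = Real.exp lam := by
  rw [Real.exp_eq_exp_ℝ, NormedSpace.exp_eq_tsum_div]

lemma my_ofReal_exp_tsum (lam : ℝ) (hlam : 0 ≤ lam) :
    ∑' n : ℕ, ENNReal.ofReal (lam ^ n / n.factorial) = ENNReal.ofReal (Real.exp lam) := by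
  rw [← ENNReal.ofReal_tsum_of_nonneg (fun n => by positivity)
    (Real.summable_pow_div_factorial lam), my_exp_tsum]

lemma my_poisson_mean (lam : ℝ) (hlam : 0 ≤ lam) :
    ∑' n : ℕ, (n : ℝ≥0∞) * ENNReal.ofReal (Real.exp (-lam) * lam ^ n / n.factorial)
      = ENNReal.ofReal lam := by
  have h1 : ∀ n : ℕ, (n : ℝ≥0∞) * ENNReal.ofReal (Real.exp (-lam) * lam ^ n / n.factorial)
      = ENNReal.ofReal (Real.exp (-lam)) * ((n : ℝ≥0∞) * ENNReal.ofReal (lam ^ n / n.factorial)) := by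
    intro n
    rw [mul_div_assoc, ENNReal.ofReal_mul (Real.exp_pos _).le]
    ring
  simp_rw [h1]
  rw [ENNReal.tsum_mul_left]
  have h2 : ∑' n : ℕ, ((n : ℝ≥0∞) * ENNReal.ofReal (lam ^ n / n.factorial))
      = ENNReal.ofReal lam * ENNReal.ofReal (Real.exp lam) := by
    rw [tsum_eq_zero_add' ENNReal.summable]
    have h3 : ∀ n : ℕ, ((n + 1 : ℕ) : ℝ≥0∞) * ENNReal.ofReal (lam ^ (n + 1) / (n + 1).factorial)
        = ENNReal.ofReal lam * ENNReal.ofReal (lam ^ n / n.factorial) := by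
      intro n
      rw [show ((n + 1 : ℕ) : ℝ≥0∞) = ENNReal.ofReal ((n + 1 : ℕ) : ℝ) by
        rw [ENNReal.ofReal_natCast], ← ENNReal.ofReal_mul (by positivity),
        ← ENNReal.ofReal_mul hlam]
      congr 1
      have hfac : ((n.factorial : ℝ)) ≠ 0 := Nat.cast_ne_zero.2 n.factorial_ne_zero
      rw [Nat.factorial_succ, pow_succ]
      push_cast
      field_simp
    simp_rw [h3]
    rw [ENNReal.tsum_mul_left, my_ofReal_exp_tsum lam hlam]
    simp
  rw [h2, ← mul_assoc, ← ENNReal.ofReal_mul (Real.exp_pos _).le]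
  rw [show Real.exp (-lam) * lam = lam * Real.exp (-lam) from mul_comm _ _,
    ENNReal.ofReal_mul hlam, mul_assoc, ← ENNReal.ofReal_mul (Real.exp_pos _).le,
    ← Real.exp_add]
  simp

lemma my_lintegral_nat {Ω : Type*} [MeasurableSpace Ω] (μ : Measure Ω)
    (X : Ω → ℕ) (hX : Measurable X) :
    ∫⁻ ω, (X ω : ℝ≥0∞) ∂μ = ∑' n : ℕ, (n : ℝ≥0∞) * μ {ω | X ω = n} := by
  have h : ∫⁻ ω, (X ω : ℝ≥0∞) ∂μ = ∫⁻ n, (n : ℝ≥0∞) ∂(μ.map X) :=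
    (lintegral_map (measurable_of_countable _) hX).symm
  rw [h, lintegral_countable']
  congr 1
  ext n
  rw [Measure.map_apply hX (measurableSet_singleton n)]
  rfl


/-- **Expected total yield.** In the repeated solicitation model with Poisson(v) prior
(so that the `X n` are independent with `X n ~ Poisson(π n · v)` for `n ≥ 1`),
with `T = min {n ≥ 1 : X n = 0}` a.s. finite and `Y = X 1 + ⋯ + X (T-1)`,
one has `E[Y] = v · E[F(T)]` where `F k = π 1 + ⋯ + π k`. -/
theorem expected_total_yield
    {Ω : Type*} [MeasurableSpace Ω] (μ : Measure Ω) [IsProbabilityMeasure μ]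
    (π : ℕ → ℝ) (hπ : ∀ n, 1 ≤ n → 0 ≤ π n) (hπsum : ∑' n : ℕ, π (n + 1) ≤ 1)
    (v : ℝ) (hv : 0 < v)
    (X : ℕ → Ω → ℕ) (hXm : ∀ n, Measurable (X n))
    (hindep : iIndepFun (fun n : ℕ => X (n + 1)) μ)
    (hX : ∀ n, 1 ≤ n → ∀ m : ℕ, μ {ω | X n ω = m}
        = ENNReal.ofReal (Real.exp (-(π n * v)) * (π n * v) ^ m / m.factorial))
    (T : Ω → ℕ) (hT : ∀ ω, T ω = sInf {n | 1 ≤ n ∧ X n ω = 0})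
    (hTfin : ∀ᵐ ω ∂μ, ∃ n, 1 ≤ n ∧ X n ω = 0)
    (Y : Ω → ℕ) (hY : ∀ ω, Y ω = ∑ n ∈ Finset.Ico 1 (T ω), X n ω)
    (F : ℕ → ℝ) (hF : ∀ k, F k = ∑ n ∈ Finset.Icc 1 k, π n) :
    ∫⁻ ω, (Y ω : ℝ≥0∞) ∂μ
      = ENNReal.ofReal v * ∫⁻ ω, ENNReal.ofReal (F (T ω)) ∂μ := by
  classical
  set A : ℕ → Set Ω := fun m => {ω | ∀ k, 1 ≤ k → k ≤ m → X k ω ≠ 0} with hA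
  have hAmeas : ∀ m, MeasurableSet (A m) := by
    intro m
    have h : A m = ⋂ k ∈ Finset.Icc 1 m, (X k ⁻¹' {0})ᶜ := by
      ext ω
      simp only [hA, Set.mem_setOf_eq, Set.mem_iInter, Set.mem_compl_iff,
        Set.mem_preimage, Set.mem_singleton_iff, Finset.mem_Icc]
      tauto
    rw [h]
    exact Set.Finite.measurableSet_biInter (Finset.finite_toSet _)
      (fun k _ => ((hXm k) (measurableSet_singleton 0)).compl)
  have hae : ∀ᵐ ω ∂μ, ∀ k : ℕ, (k < T ω ↔ ω ∈ A k) := by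
    filter_upwards [hTfin] with ω hω k
    have hne : {n | 1 ≤ n ∧ X n ω = 0}.Nonempty := hω
    have hmem := Nat.sInf_mem hne
    constructor
    · intro hk j hj1 hjk hXj
      have hj : j ∈ {n | 1 ≤ n ∧ X n ω = 0} := ⟨hj1, hXj⟩
      have := Nat.sInf_le hj
      rw [hT ω] at hk
      omega
    · intro hAk
      by_contra h
      push_neg at h
      rw [hT ω] at h
      exact hAk _ hmem.1 (by omega) hmem.2
  -- independence of X (m+1) and indicator of A m
  have hindepAm : ∀ m : ℕ, IndepFun (fun ω => (X (m+1) ω : ℝ≥0∞))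
      ((A m).indicator (fun _ => (1:ℝ≥0∞))) μ := by
    intro m
    have hdisj : Disjoint ({m} : Finset ℕ) (Finset.range m) := by
      simp [Finset.disjoint_left]
    have h := hindep.indepFun_finset {m} (Finset.range m) hdisj (fun i => hXm (i+1))
    have h2 := h.comp
      (φ := fun y : (({m} : Finset ℕ) : Type) → ℕ =>
        ((y ⟨m, Finset.mem_singleton_self m⟩ : ℕ) : ℝ≥0∞))
      (ψ := fun y : ((Finset.range m : Finset ℕ) : Type) → ℕ =>
        if ∀ i : (Finset.range m : Finset ℕ), y i ≠ 0 then (1:ℝ≥0∞) else 0)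
      (measurable_of_countable _) (measurable_of_countable _)
    convert h2 using 1
    · rfl
    funext ω
    simp only [Function.comp_apply, Set.indicator_apply]
    congr 1
    simp only [hA, Set.mem_setOf_eq, eq_iff_iff]
    constructor
    · intro hall i
      exact hall (i.1 + 1) (by omega) (by have := Finset.mem_range.1 i.2; omega)
    · intro hall k hk1 hkm
      have hk : k - 1 ∈ Finset.range m := Finset.mem_range.2 (by omega)
      have := hall ⟨k - 1, hk⟩
      simpa [Nat.sub_add_cancel hk1] using this
  -- A (m+1) characterization
  have hAsucc : ∀ (m : ℕ) (ω : Ω), ω ∈ A (m+1) ↔ ω ∈ A m ∧ X (m+1) ω ≠ 0 := by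
    intro m ω
    constructor
    · intro h
      exact ⟨fun k h1 h2 => h k h1 (by omega), h (m+1) (by omega) le_rfl⟩
    · rintro ⟨h1, h2⟩ k hk1 hk2
      rcases Nat.lt_or_ge k (m+1) with hlt | hge
      · exact h1 k hk1 (by omega)
      · have hkeq : k = m + 1 := by omega
        subst hkeq; exact h2
  -- Poisson mean
  have hmean : ∀ m : ℕ, ∫⁻ ω, (X (m+1) ω : ℝ≥0∞) ∂μ = ENNReal.ofReal (π (m+1) * v) := by
    intro m
    rw [my_lintegral_nat μ _ (hXm (m+1))]
    have hXp : ∀ k : ℕ, μ {ω | X (m+1) ω = k}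
        = ENNReal.ofReal (Real.exp (-(π (m+1) * v)) * (π (m+1) * v) ^ k / k.factorial) :=
      hX (m+1) (by omega)
    simp_rw [hXp]
    exact my_poisson_mean _ (mul_nonneg (hπ _ (by omega)) hv.le)
  -- key per-term integral
  have key : ∀ m : ℕ, ∫⁻ ω, (if ω ∈ A (m+1) then (X (m+1) ω : ℝ≥0∞) else 0) ∂μ
      = ENNReal.ofReal (π (m+1) * v) * μ (A m) := by
    intro m
    have heq : (fun ω => (if ω ∈ A (m+1) then (X (m+1) ω : ℝ≥0∞) else 0))
        = fun ω => (X (m+1) ω : ℝ≥0∞) * (A m).indicator (fun _ => (1:ℝ≥0∞)) ω := by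
      funext ω
      rw [Set.indicator_apply]
      by_cases h1 : ω ∈ A m
      · by_cases h2 : X (m+1) ω = 0
        · rw [if_neg (fun h => ((hAsucc m ω).1 h).2 h2), if_pos h1, h2]
          simp
        · rw [if_pos ((hAsucc m ω).2 ⟨h1, h2⟩), if_pos h1, mul_one]
      · rw [if_neg (fun h => h1 ((hAsucc m ω).1 h).1), if_neg h1, mul_zero]
    have hf : Measurable (fun ω => (X (m+1) ω : ℝ≥0∞)) :=
      (measurable_of_countable _).comp (hXm (m+1))
    have hg : Measurable ((A m).indicator (fun _ => (1:ℝ≥0∞))) :=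
      (measurable_const (a := (1:ℝ≥0∞))).indicator (hAmeas m)
    have hint := lintegral_mul_eq_lintegral_mul_lintegral_of_indepFun hf hg (hindepAm m)
    simp only [Pi.mul_apply] at hint
    rw [heq, hint, hmean m]
    congr 1
    exact lintegral_indicator_one (hAmeas m)
  -- pointwise expansion of Y
  have hYsum : ∀ ω, ((Y ω : ℝ≥0∞))
      = ∑' m : ℕ, (if m + 1 < T ω then (X (m+1) ω : ℝ≥0∞) else 0) := by
    intro ω
    rw [hY ω, Nat.cast_sum,
      tsum_eq_sum (s := Finset.range (T ω - 1))
        (fun m hm => if_neg (by rw [Finset.mem_range] at hm; omega)),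
      Finset.sum_Ico_eq_sum_range]
    apply Finset.sum_congr rfl
    intro m hm
    rw [Finset.mem_range] at hm
    rw [if_pos (by omega), add_comm 1 m]
  -- LHS
  have hLHS : ∫⁻ ω, (Y ω : ℝ≥0∞) ∂μ
      = ∑' m : ℕ, ENNReal.ofReal (π (m+1) * v) * μ (A m) := by
    have h1 : ∫⁻ ω, (Y ω : ℝ≥0∞) ∂μ
        = ∫⁻ ω, ∑' m : ℕ, (if ω ∈ A (m+1) then (X (m+1) ω : ℝ≥0∞) else 0) ∂μ := by
      apply lintegral_congr_ae
      filter_upwards [hae] with ω hω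
      rw [hYsum ω]
      refine tsum_congr fun m => ?_
      by_cases h : ω ∈ A (m+1)
      · rw [if_pos h, if_pos ((hω (m+1)).2 h)]
      · rw [if_neg h, if_neg (fun hlt => h ((hω (m+1)).1 hlt))]
    have hmeas : ∀ m : ℕ, AEMeasurable
        (fun ω => if ω ∈ A (m+1) then (X (m+1) ω : ℝ≥0∞) else 0) μ := by
      intro m
      have heq : (fun ω => if ω ∈ A (m+1) then (X (m+1) ω : ℝ≥0∞) else 0)
          = (A (m+1)).indicator (fun ω => (X (m+1) ω : ℝ≥0∞)) := by
        funext ω; rw [Set.indicator_apply]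
      rw [heq]
      exact (((measurable_of_countable _).comp (hXm (m+1))).indicator
        (hAmeas (m+1))).aemeasurable
    rw [h1, lintegral_tsum hmeas]
    exact tsum_congr key
  -- RHS
  have hRHS : ∫⁻ ω, ENNReal.ofReal (F (T ω)) ∂μ
      = ∑' m : ℕ, ENNReal.ofReal (π (m+1)) * μ (A m) := by
    have h1 : ∫⁻ ω, ENNReal.ofReal (F (T ω)) ∂μ
        = ∫⁻ ω, ∑' m : ℕ, (if ω ∈ A m then ENNReal.ofReal (π (m+1)) else 0) ∂μ := by
      apply lintegral_congr_ae
      filter_upwards [hae] with ω hω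
      rw [hF (T ω),
        ENNReal.ofReal_sum_of_nonneg (fun n hn => hπ n (Finset.mem_Icc.1 hn).1),
        tsum_eq_sum (s := Finset.range (T ω))
          (fun m hm => by
            rw [Finset.mem_range] at hm
            exact if_neg (fun hAm => hm ((hω m).2 hAm))),
        show Finset.Icc 1 (T ω) = Finset.Ico 1 (T ω + 1) from
          by rw [Finset.Ico_add_one_right_eq_Icc], Finset.sum_Ico_eq_sum_range]
      simp only [Nat.add_sub_cancel]
      apply Finset.sum_congr rfl
      intro m hm
      rw [Finset.mem_range] at hm
      rw [if_pos ((hω m).1 hm), add_comm 1 m]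
    have hmeas : ∀ m : ℕ, AEMeasurable
        (fun ω => if ω ∈ A m then ENNReal.ofReal (π (m+1)) else 0) μ := by
      intro m
      have heq : (fun ω => if ω ∈ A m then ENNReal.ofReal (π (m+1)) else 0)
          = (A m).indicator (fun _ => ENNReal.ofReal (π (m+1))) := by
        funext ω; rw [Set.indicator_apply]
      rw [heq]
      exact (measurable_const.indicator (hAmeas m)).aemeasurable
    rw [h1, lintegral_tsum hmeas]
    refine tsum_congr fun m => ?_
    have heq : (fun ω => if ω ∈ A m then ENNReal.ofReal (π (m+1)) else 0)
        = (A m).indicator (fun _ => ENNReal.ofReal (π (m+1))) := by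
      funext ω; rw [Set.indicator_apply]
    rw [heq, lintegral_indicator_const (hAmeas m)]
  rw [hLHS, hRHS, ← ENNReal.tsum_mul_left]
  refine tsum_congr fun m => ?_
  rw [mul_comm (π (m+1)) v, ENNReal.ofReal_mul hv.le, mul_assoc]
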